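/- Let U ⊆ ℂ be open, λ : U → ℂ differentiable (holomorphic), and let x : ℕ × U → ℂ be such that for each ω ∈ U the sequence x(·,ω) solves the Jacobi difference equation with coefficients (𝔞, 𝔟) and spectral parameter λ(ω), and for each k the map ω ↦ x(k,ω) is differentiable at a point ω₀ ∈ U. Write ẋ(k) for the ω-derivative of x(k,·) at ω₀ and λ̇ for the derivative of λ at ω₀. Then for every N ≥ 1, 𝔟(N)·{ẋ, x̄(·,ω₀)}(N) − 𝔟(0)·{ẋ, x̄(·,ω₀)}(0) = λ̇·∑_{k=1}^{N} |x(k,ω₀)|² + (λ(ω₀) − λ(ω₀)^̄)·∑_{k=1}^{N} ẋ(k)·x̄(k,ω₀), where {x,y}(k) = x(k)y(k+1) − x(k+1)y(k). -/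

import Mathlib

open Complex

/-- The Jacobi difference equation: for all `k ≥ 1`,
`-𝔟(k-1)·x(k-1) + 𝔞(k)·x(k) - 𝔟(k)·x(k+1) = λ·x(k)` (here written with `k+1` in place of `k`). -/
def IsJacobiSolution (𝔞 𝔟 : ℕ → ℝ) (lam : ℂ) (x : ℕ → ℂ) : Prop :=
  ∀ k : ℕ, -(𝔟 k : ℂ) * x k + (𝔞 (k + 1) : ℂ) * x (k + 1) - (𝔟 (k + 1) : ℂ) * x (k + 2)
    = lam * x (k + 1)

/-- Discrete Wronskian `{x,y}(k) = x(k)y(k+1) − x(k+1)y(k)`. -/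
def discrWronskian (x y : ℕ → ℂ) (k : ℕ) : ℂ := x k * y (k + 1) - x (k + 1) * y k

theorem wronskian_deriv (𝔞 𝔟 : ℕ → ℝ) (h𝔟 : ∀ k, 0 < 𝔟 k)
    (U : Set ℂ) (hU : IsOpen U) (ω₀ : ℂ) (hω₀ : ω₀ ∈ U)
    (lam : ℂ → ℂ) (lam' : ℂ) (hlam : ∀ ω ∈ U, DifferentiableAt ℂ lam ω)
    (hlam' : HasDerivAt lam lam' ω₀)
    (x : ℕ → ℂ → ℂ) (hx : ∀ ω ∈ U, IsJacobiSolution 𝔞 𝔟 (lam ω) (fun k => x k ω))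
    (x' : ℕ → ℂ) (hx' : ∀ k, HasDerivAt (x k) (x' k) ω₀) :
    ∀ N : ℕ, 1 ≤ N →
      (𝔟 N : ℂ) * discrWronskian x' (fun k => (starRingEnd ℂ) (x k ω₀)) N
        - (𝔟 0 : ℂ) * discrWronskian x' (fun k => (starRingEnd ℂ) (x k ω₀)) 0
      = lam' * ∑ k ∈ Finset.Icc 1 N, ((‖x k ω₀‖ : ℝ) : ℂ) ^ 2
        + (lam ω₀ - (starRingEnd ℂ) (lam ω₀))
          * ∑ k ∈ Finset.Icc 1 N, x' k * (starRingEnd ℂ) (x k ω₀) := by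

  have habs : ∀ z : ℂ, ((‖z‖ : ℝ) : ℂ) ^ 2 = z * (starRingEnd ℂ) z := by
    intro z
    have : ((‖z‖ : ℝ) : ℂ) ^ 2 = ((‖z‖ ^ 2 : ℝ) : ℂ) := by push_cast; ring
    rw [this, Complex.sq_norm, Complex.mul_conj]
  have key : ∀ k : ℕ, -(𝔟 k : ℂ) * x' k + (𝔞 (k+1) : ℂ) * x' (k+1) - (𝔟 (k+1) : ℂ) * x' (k+2)
      = lam' * x (k+1) ω₀ + lam ω₀ * x' (k+1) := by
    intro k
    set g : ℂ → ℂ := fun ω => -(𝔟 k : ℂ) * x k ω + (𝔞 (k+1) : ℂ) * x (k+1) ω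
      - (𝔟 (k+1) : ℂ) * x (k+2) ω - lam ω * x (k+1) ω with hg
    have hd : HasDerivAt g (-(𝔟 k : ℂ) * x' k + (𝔞 (k+1) : ℂ) * x' (k+1)
        - (𝔟 (k+1) : ℂ) * x' (k+2) - (lam' * x (k+1) ω₀ + lam ω₀ * x' (k+1))) ω₀ := by
      exact ((((hx' k).const_mul _).add ((hx' (k+1)).const_mul _)).sub
        ((hx' (k+2)).const_mul _)).sub (hlam'.mul (hx' (k+1)))
    have h0 : g =ᶠ[nhds ω₀] fun _ => (0:ℂ) := by
      filter_upwards [hU.mem_nhds hω₀] with ω hω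
      have h := hx ω hω k
      simp only [hg]
      linear_combination h
    have hd0 : HasDerivAt g 0 ω₀ :=
      (hasDerivAt_const ω₀ (0:ℂ)).congr_of_eventuallyEq h0
    have := hd.unique hd0
    linear_combination this
  have conj_eq : ∀ k : ℕ, -(𝔟 k : ℂ) * (starRingEnd ℂ) (x k ω₀)
      + (𝔞 (k+1) : ℂ) * (starRingEnd ℂ) (x (k+1) ω₀)
      - (𝔟 (k+1) : ℂ) * (starRingEnd ℂ) (x (k+2) ω₀)
      = (starRingEnd ℂ) (lam ω₀) * (starRingEnd ℂ) (x (k+1) ω₀) := by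
    intro k
    have h := congrArg (starRingEnd ℂ) (hx ω₀ hω₀ k)
    simpa [map_mul, map_add, map_sub, map_neg, Complex.conj_ofReal] using h
  have step : ∀ k : ℕ,
      (𝔟 (k+1) : ℂ) * discrWronskian x' (fun j => (starRingEnd ℂ) (x j ω₀)) (k+1)
        - (𝔟 k : ℂ) * discrWronskian x' (fun j => (starRingEnd ℂ) (x j ω₀)) k
      = lam' * ((‖x (k+1) ω₀‖ : ℝ) : ℂ) ^ 2
        + (lam ω₀ - (starRingEnd ℂ) (lam ω₀)) * (x' (k+1) * (starRingEnd ℂ) (x (k+1) ω₀)) := by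
    intro k
    rw [habs]
    simp only [discrWronskian]
    linear_combination ((starRingEnd ℂ) (x (k+1) ω₀)) * key k - (x' (k+1)) * conj_eq k
  intro N hN
  induction N, hN using Nat.le_induction with
  | base =>
    simpa using step 0
  | succ n hn ih =>
    rw [Finset.sum_Icc_succ_top (by omega : 1 ≤ n + 1),
        Finset.sum_Icc_succ_top (by omega : 1 ≤ n + 1)]
    have := step n
    linear_combination ih + this
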